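/- For every positive integer k, Σ_{j=1}^{4k-1} (-1)^{⌊ j(4k-1)/(4k) ⌋} = 1. Equivalently, taking p = 4k-1 and q = 8k, the sum Σ_{j=1}^{(q-2)/2} (-1)^{⌊2jp/q⌋} equals 1, so that equation (1) of the paper gives lk(λ_1, K_1) = lk(λ_2, K_2) = -1 for the 2-bridge links L_{(4k-1)/(8k)} for all k. -/

import Mathlib

/-- For every positive integer `k`, `∑_{j=1}^{4k-1} (-1)^⌊j(4k-1)/(4k)⌋ = 1`.
With `p = 4k-1`, `q = 8k` this says `∑_{j=1}^{(q-2)/2} (-1)^⌊2jp/q⌋ = 1`, so that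
`lk(λᵢ, Kᵢ) = -1` for the 2-bridge links `L_{(4k-1)/(8k)}`. -/
theorem stmt_1 (k : ℕ) (hk : 0 < k) :
    ∑ j ∈ Finset.Icc 1 (4 * k - 1),
      ((Int.negOnePow ⌊(j * (4 * k - 1) : ℚ) / (4 * k : ℚ)⌋ : ℤˣ) : ℤ) = 1 := by
  have hq : (0 : ℚ) < (4 * k : ℚ) := by positivity
  have key : ∀ j ∈ Finset.Icc 1 (4 * k - 1),
      ((Int.negOnePow ⌊(j * (4 * k - 1) : ℚ) / (4 * k : ℚ)⌋ : ℤˣ) : ℤ)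
        = (-1 : ℤ) ^ (j - 1) := by
    intro j hj
    simp only [Finset.mem_Icc] at hj
    obtain ⟨h1, h2⟩ := hj
    have hfloor : ⌊(j * (4 * k - 1) : ℚ) / (4 * k : ℚ)⌋ = (j : ℤ) - 1 := by
      rw [Int.floor_eq_iff]
      constructor
      · rw [le_div_iff₀ hq]
        have hj4k : (j : ℚ) + 1 ≤ 4 * k := by
          have : j + 1 ≤ 4 * k := by omega
          exact_mod_cast this
        push_cast
        nlinarith
      · rw [div_lt_iff₀ hq]
        have hj1 : (1 : ℚ) ≤ j := by exact_mod_cast h1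
        push_cast
        nlinarith
    rw [hfloor]
    have : ((j : ℤ) - 1) = ((j - 1 : ℕ) : ℤ) := by omega
    rw [this, Int.coe_negOnePow_natCast]
  rw [Finset.sum_congr rfl key, show Finset.Icc 1 (4*k-1) = Finset.Ico 1 (4*k-1+1) by rw [Finset.Ico_add_one_right_eq_Icc], Finset.sum_Ico_eq_sum_range]
  have hodd : Odd (4 * k - 1) := ⟨2 * k - 1, by omega⟩
  simp only [Nat.add_sub_cancel, show ∀ i, 1 + i - 1 = i from fun i => by omega]
  rw [neg_one_geom_sum, if_neg (Nat.not_even_iff_odd.mpr hodd)]
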